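/- Let R = q^{2A} with A ∈ ℕ, A ≥ 1, and let a, b ∈ ℤ_q with a ≠ b. Set T := {(x,y) ∈ ℚ_q² : |x + 2ay| ≤ R, |y| ≤ R²} and T' := {(x,y) ∈ ℚ_q² : |x + 2by| ≤ R, |y| ≤ R²}. Then μ²(T ∩ T') ≤ R² / |b − a|. -/

import Mathlib

open MeasureTheory ENNReal

noncomputable instance (q : ℕ) [Fact q.Prime] : MeasurableSpace ℚ_[q] := borel _
instance (q : ℕ) [Fact q.Prime] : BorelSpace ℚ_[q] := ⟨rfl⟩

section aux

variable {q : ℕ} [Fact q.Prime]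

lemma ball_measurable (r : ℝ) : MeasurableSet {x : ℚ_[q] | ‖x‖ ≤ r} :=
  (isClosed_le continuous_norm continuous_const).measurableSet

lemma padic_ball_measure (μ : Measure ℚ_[q]) [μ.IsAddHaarMeasure]
    (hμ : μ {x : ℚ_[q] | ‖x‖ ≤ 1} = 1) (n : ℕ) :
    μ {x : ℚ_[q] | ‖x‖ ≤ (q : ℝ) ^ n} = (q : ℝ≥0∞) ^ n := by
  have hp : q.Prime := Fact.out
  have hq0 : (q : ℚ_[q]) ≠ 0 := Nat.cast_ne_zero.mpr hp.ne_zero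
  have hqR : (0 : ℝ) < q := by exact_mod_cast hp.pos
  have hnormq : ‖(q : ℚ_[q])‖ = (q : ℝ)⁻¹ := Padic.norm_p
  set c : ℕ → ℚ_[q] := fun j => (j : ℚ_[q]) * ((q : ℚ_[q]) ^ n)⁻¹ with hc
  have key : {x : ℚ_[q] | ‖x‖ ≤ (q : ℝ) ^ n}
      = ⋃ j ∈ Finset.range (q ^ n), {x : ℚ_[q] | ‖x - c j‖ ≤ 1} := by
    ext x
    simp only [Set.mem_setOf_eq, Set.mem_iUnion, Finset.mem_range]
    constructor
    · intro hx
      have hu : ‖x * (q : ℚ_[q]) ^ n‖ ≤ 1 := by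
        rw [norm_mul, norm_pow, hnormq]
        calc ‖x‖ * ((q:ℝ)⁻¹) ^ n ≤ (q:ℝ)^n * ((q:ℝ)⁻¹)^n :=
              mul_le_mul_of_nonneg_right hx (by positivity)
          _ = 1 := by rw [← mul_pow, mul_inv_cancel₀ hqR.ne', one_pow]
      set z : ℤ_[q] := ⟨x * (q : ℚ_[q]) ^ n, hu⟩ with hz
      refine ⟨z.appr n, z.appr_lt n, ?_⟩
      obtain ⟨d, hd⟩ := Ideal.mem_span_singleton.mp (z.appr_spec n)
      have hzq : ((z : ℚ_[q])) = x * (q : ℚ_[q]) ^ n := rfl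
      have hx' : x - c (z.appr n)
          = ((z - (z.appr n : ℤ_[q]) : ℤ_[q]) : ℚ_[q]) * ((q : ℚ_[q]) ^ n)⁻¹ := by
        push_cast [hzq, hc]
        field_simp
      rw [hx', hd, norm_mul, norm_inv, norm_pow, hnormq, inv_pow, inv_inv]
      push_cast
      rw [norm_mul, norm_pow, hnormq]
      calc ((q:ℝ)⁻¹)^n * ‖((d : ℤ_[q]) : ℚ_[q])‖ * (q:ℝ)^n
          ≤ ((q:ℝ)⁻¹)^n * 1 * (q:ℝ)^n := by
            have := d.2
            gcongr
        _ = 1 := by rw [mul_one, ← mul_pow, inv_mul_cancel₀ hqR.ne', one_pow]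
    · rintro ⟨j, hj, hxj⟩
      have hcj : ‖c j‖ ≤ (q : ℝ) ^ n := by
        rw [hc]
        simp only []
        rw [norm_mul, norm_inv, norm_pow, hnormq, inv_pow, inv_inv]
        have h1 : ‖((j : ℤ) : ℚ_[q])‖ ≤ 1 := Padic.norm_int_le_one _
        push_cast at h1
        calc ‖(j:ℚ_[q])‖ * (q:ℝ)^n ≤ 1 * (q:ℝ)^n := by gcongr
          _ = (q:ℝ)^n := one_mul _
      have hxd : x = (x - c j) + c j := by ring
      rw [hxd]
      calc ‖(x - c j) + c j‖ ≤ max ‖x - c j‖ ‖c j‖ := Padic.nonarchimedean _ _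
        _ ≤ (q : ℝ) ^ n := max_le (hxj.trans (one_le_pow₀ (by exact_mod_cast hp.one_le))) hcj
  have hdisj : (↑(Finset.range (q ^ n)) : Set ℕ).PairwiseDisjoint
      (fun j => {x : ℚ_[q] | ‖x - c j‖ ≤ 1}) := by
    intro j hj j' hj' hne
    simp only [Finset.coe_range, Set.mem_Iio] at hj hj'
    rw [Function.onFun, Set.disjoint_left]
    intro x hx hx'
    simp only [Set.mem_setOf_eq] at hx hx'
    have h1 : ‖c j - c j'‖ ≤ 1 := by
      have : c j - c j' = (x - c j') - (x - c j) := by ring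
      rw [this, sub_eq_add_neg]
      refine le_trans (Padic.nonarchimedean _ _) (max_le hx' ?_)
      rwa [norm_neg]
    have h2 : c j - c j' = (((j : ℤ) - (j' : ℤ) : ℤ) : ℚ_[q]) * ((q : ℚ_[q]) ^ n)⁻¹ := by
      rw [hc]; push_cast; ring
    rw [h2, norm_mul, norm_inv, norm_pow, hnormq, inv_pow, inv_inv] at h1
    have hdvd : ((q : ℤ) ^ n) ∣ ((j : ℤ) - (j' : ℤ)) := by
      rw [← Padic.norm_int_le_pow_iff_dvd, zpow_neg, zpow_natCast, ← one_div]
      exact (le_div_iff₀ (by positivity)).mpr h1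
    have hne' : (j : ℤ) - (j' : ℤ) ≠ 0 := sub_ne_zero.mpr (by exact_mod_cast hne)
    have hle := Int.le_of_dvd (abs_pos.mpr hne') ((dvd_abs _ _).mpr hdvd)
    have hjz : (j : ℤ) < (q:ℤ)^n := by exact_mod_cast hj
    have hj'z : (j' : ℤ) < (q:ℤ)^n := by exact_mod_cast hj'
    have habs : |(j : ℤ) - (j' : ℤ)| < (q:ℤ)^n := by
      rw [abs_sub_lt_iff]
      constructor <;> omega
    linarith
  have hmeas : ∀ j ∈ Finset.range (q ^ n),
      MeasurableSet {x : ℚ_[q] | ‖x - c j‖ ≤ 1} := fun j _ =>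
    (ball_measurable 1).preimage (measurable_sub_const (c j))
  have htrans : ∀ j : ℕ, μ {x : ℚ_[q] | ‖x - c j‖ ≤ 1} = 1 := by
    intro j
    have : {x : ℚ_[q] | ‖x - c j‖ ≤ 1}
        = (fun x => x + (-(c j))) ⁻¹' {x : ℚ_[q] | ‖x‖ ≤ 1} := by
      ext x; simp [sub_eq_add_neg]
    rw [this, measure_preimage_add_right, hμ]
  rw [key, measure_biUnion_finset hdisj hmeas]
  simp only [htrans, Finset.sum_const, Finset.card_range, nsmul_eq_mul, mul_one]
  push_cast; ring

end aux

section aux2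

variable {q : ℕ} [Fact q.Prime]

lemma padic_shifted_ball_measure (μ : Measure ℚ_[q]) [μ.IsAddHaarMeasure]
    (hμ : μ {x : ℚ_[q] | ‖x‖ ≤ 1} = 1) (d : ℚ_[q]) (m : ℕ) :
    μ {x : ℚ_[q] | ‖x + d‖ ≤ (q : ℝ) ^ m} = (q : ℝ≥0∞) ^ m := by
  have : {x : ℚ_[q] | ‖x + d‖ ≤ (q : ℝ) ^ m}
      = (fun x => x + d) ⁻¹' {x : ℚ_[q] | ‖x‖ ≤ (q : ℝ) ^ m} := rfl
  rw [this, measure_preimage_add_right, padic_ball_measure μ hμ m]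

lemma padic_strip_measure (μ : Measure ℚ_[q]) [μ.IsAddHaarMeasure] [SigmaFinite μ]
    (hμ : μ {x : ℚ_[q] | ‖x‖ ≤ 1} = 1) (c : ℚ_[q]) (m n : ℕ) :
    μ.prod μ {w : ℚ_[q] × ℚ_[q] | ‖w.1 + c * w.2‖ ≤ (q : ℝ) ^ m ∧ ‖w.2‖ ≤ (q : ℝ) ^ n}
      = (q : ℝ≥0∞) ^ (m + n) := by
  have hS : MeasurableSet {w : ℚ_[q] × ℚ_[q] |
      ‖w.1 + c * w.2‖ ≤ (q : ℝ) ^ m ∧ ‖w.2‖ ≤ (q : ℝ) ^ n} := by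
    apply MeasurableSet.inter
    · exact (isClosed_le (Continuous.norm (by fun_prop)) continuous_const).measurableSet
    · exact (isClosed_le (Continuous.norm (by fun_prop)) continuous_const).measurableSet
  rw [Measure.prod_apply_symm hS]
  have hsec : ∀ y : ℚ_[q],
      μ ((fun x => (x, y)) ⁻¹' {w : ℚ_[q] × ℚ_[q] |
        ‖w.1 + c * w.2‖ ≤ (q : ℝ) ^ m ∧ ‖w.2‖ ≤ (q : ℝ) ^ n})
      = Set.indicator {y : ℚ_[q] | ‖y‖ ≤ (q:ℝ)^n} (fun _ => (q:ℝ≥0∞)^m) y := by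
    intro y
    by_cases hy : ‖y‖ ≤ (q:ℝ)^n
    · have hset : ((fun x => (x, y)) ⁻¹' {w : ℚ_[q] × ℚ_[q] |
          ‖w.1 + c * w.2‖ ≤ (q : ℝ) ^ m ∧ ‖w.2‖ ≤ (q : ℝ) ^ n})
          = {x : ℚ_[q] | ‖x + c * y‖ ≤ (q : ℝ) ^ m} := by
        ext x; simp [hy]
      rw [hset, padic_shifted_ball_measure μ hμ]
      exact (Set.indicator_of_mem (show y ∈ {y : ℚ_[q] | ‖y‖ ≤ (q:ℝ)^n} from hy) (fun _ => (q:ℝ≥0∞)^m)).symm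
    · have hset : ((fun x => (x, y)) ⁻¹' {w : ℚ_[q] × ℚ_[q] |
          ‖w.1 + c * w.2‖ ≤ (q : ℝ) ^ m ∧ ‖w.2‖ ≤ (q : ℝ) ^ n}) = ∅ := by
        ext x; simp [hy]
      rw [hset, measure_empty]
      exact (Set.indicator_of_notMem (show y ∉ {y : ℚ_[q] | ‖y‖ ≤ (q:ℝ)^n} from hy) (fun _ => (q:ℝ≥0∞)^m)).symm
  rw [lintegral_congr hsec, lintegral_indicator (ball_measurable _) _,
    setLIntegral_const, padic_ball_measure μ hμ n, pow_add]

end aux2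

theorem tube_intersection (q : ℕ) [Fact q.Prime] (hq2 : q ≠ 2)
    (μ : Measure ℚ_[q]) [μ.IsAddHaarMeasure] [SigmaFinite μ]
    (hμ : μ {x : ℚ_[q] | ‖x‖ ≤ 1} = 1)
    (A : ℕ) (hA : 1 ≤ A) (a b : ℚ_[q]) (ha : ‖a‖ ≤ 1) (hb : ‖b‖ ≤ 1) (hab : a ≠ b) :
    (μ.prod μ)
        ({w : ℚ_[q] × ℚ_[q] |
            ‖w.1 + 2 * a * w.2‖ ≤ (q : ℝ) ^ ((2 * A : ℕ) : ℤ) ∧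
            ‖w.2‖ ≤ (q : ℝ) ^ ((4 * A : ℕ) : ℤ)} ∩
          {w : ℚ_[q] × ℚ_[q] |
            ‖w.1 + 2 * b * w.2‖ ≤ (q : ℝ) ^ ((2 * A : ℕ) : ℤ) ∧
            ‖w.2‖ ≤ (q : ℝ) ^ ((4 * A : ℕ) : ℤ)})
      ≤ ENNReal.ofReal ((q : ℝ) ^ ((4 * A : ℕ) : ℤ) / ‖b - a‖) := by
  have hp : q.Prime := Fact.out
  have hqR : (0 : ℝ) < q := by exact_mod_cast hp.pos
  have hba : b - a ≠ 0 := sub_ne_zero.mpr (Ne.symm hab)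
  -- the valuation
  have hba1 : ‖b - a‖ ≤ 1 := by
    rw [sub_eq_add_neg]
    refine le_trans (Padic.nonarchimedean _ _) (max_le hb ?_)
    rwa [norm_neg]
  set v : ℕ := (b - a).valuation.toNat with hv
  have hval : ((v : ℤ)) = (b - a).valuation :=
    Int.toNat_of_nonneg ((Padic.norm_le_one_iff_val_nonneg _).mp hba1)
  have hnormba : ‖b - a‖ = ((q : ℝ) ^ v)⁻¹ := by
    rw [Padic.norm_eq_zpow_neg_valuation hba, ← hval, zpow_neg, zpow_natCast]
  have h2 : ‖(2 : ℚ_[q])‖ = 1 := by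
    have hle : ‖((2 : ℤ) : ℚ_[q])‖ ≤ 1 := Padic.norm_int_le_one _
    have hlt : ¬ ‖((2 : ℤ) : ℚ_[q])‖ < 1 := by
      rw [Padic.norm_intCast_lt_one_iff]
      intro hdvd
      exact hq2 ((Nat.prime_dvd_prime_iff_eq hp Nat.prime_two).mp (by exact_mod_cast hdvd))
    have heq : ‖((2 : ℤ) : ℚ_[q])‖ = 1 := le_antisymm hle (not_lt.mp hlt)
    exact_mod_cast heq
  have hsub : ({w : ℚ_[q] × ℚ_[q] |
            ‖w.1 + 2 * a * w.2‖ ≤ (q : ℝ) ^ ((2 * A : ℕ) : ℤ) ∧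
            ‖w.2‖ ≤ (q : ℝ) ^ ((4 * A : ℕ) : ℤ)} ∩
          {w : ℚ_[q] × ℚ_[q] |
            ‖w.1 + 2 * b * w.2‖ ≤ (q : ℝ) ^ ((2 * A : ℕ) : ℤ) ∧
            ‖w.2‖ ≤ (q : ℝ) ^ ((4 * A : ℕ) : ℤ)})
      ⊆ {w : ℚ_[q] × ℚ_[q] |
            ‖w.1 + 2 * a * w.2‖ ≤ (q : ℝ) ^ (2 * A : ℕ) ∧
            ‖w.2‖ ≤ (q : ℝ) ^ (2 * A + v : ℕ)} := by
    rintro w ⟨⟨h1, _⟩, ⟨h1b, _⟩⟩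
    rw [zpow_natCast] at h1 h1b
    refine ⟨h1, ?_⟩
    have hdiff : ‖(2 * (b - a)) * w.2‖ ≤ (q:ℝ)^(2*A) := by
      have he : (2 * (b - a)) * w.2 = (w.1 + 2*b*w.2) - (w.1 + 2*a*w.2) := by ring
      rw [he, sub_eq_add_neg]
      refine le_trans (Padic.nonarchimedean _ _) (max_le h1b ?_)
      rwa [norm_neg]
    rw [norm_mul, norm_mul, h2, one_mul, hnormba] at hdiff
    rw [pow_add]
    calc ‖w.2‖ = ((q:ℝ)^v)⁻¹ * ‖w.2‖ * (q:ℝ)^v := by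
          field_simp
      _ ≤ (q:ℝ)^(2*A) * (q:ℝ)^v := by gcongr
  refine le_trans (measure_mono hsub) ?_
  rw [padic_strip_measure μ hμ (2*a) (2*A) (2*A+v)]
  have hrhs : (q:ℝ)^((4*A : ℕ):ℤ) / ‖b - a‖ = (q:ℝ)^(4*A + v : ℕ) := by
    rw [hnormba, zpow_natCast]
    rw [div_eq_mul_inv, inv_inv, ← pow_add]
  rw [hrhs]
  have hofr : ENNReal.ofReal ((q:ℝ)^(4*A+v : ℕ)) = (q:ℝ≥0∞)^(4*A+v : ℕ) := by
    rw [ENNReal.ofReal_pow hqR.le, ENNReal.ofReal_natCast]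
  rw [hofr]
  apply le_of_eq
  congr 1
  ring
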